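/- Let p ≥ 2 be an integer and suppose χ = C_p. Then the minimum of F^p_m over R^p exists and equals 0, and the minimizer is unique up to dilation: there exists a minimizer V ∈ R^p, and any two minimizers V, W ∈ R^p satisfy W = λV for some λ > 0. -/

import Mathlib

open scoped BigOperators
noncomputable section

/-- Internal (diffusion) part: sum of (X_{i+1} - X_i)^(1-m) over consecutive gaps. -/
def gapSum (m : ℝ) (p : ℕ) (X : EuclideanSpace ℝ (Fin p)) : ℝ :=
  ∑ i : Fin p, if h : (i : ℕ) + 1 < p then (X ⟨(i : ℕ) + 1, h⟩ - X i) ^ (1 - m) else 0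

/-- Interaction part: sum of |X_i - X_j|^(1-m) over ordered pairs i ≠ j. -/
def pairSum (m : ℝ) (p : ℕ) (X : EuclideanSpace ℝ (Fin p)) : ℝ :=
  ∑ i : Fin p, ∑ j : Fin p, if i ≠ j then |X i - X j| ^ (1 - m) else 0

/-- The discrete free energy F^p_m. -/
def FF (m χ : ℝ) (p : ℕ) (X : EuclideanSpace ℝ (Fin p)) : ℝ :=
  (m - 1)⁻¹ * gapSum m p X - (χ / (m - 1)) * pairSum m p X

/-- Membership in R^p: strictly increasing with zero mean. -/
def memR (p : ℕ) (X : EuclideanSpace ℝ (Fin p)) : Prop :=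
  (StrictMono fun i => X i) ∧ ∑ i, X i = 0

/-- The critical constant C_p, with 1/C_p the sup of the HLS ratio. -/
def Cp (m : ℝ) (p : ℕ) : ℝ :=
  (sSup {r : ℝ | ∃ X : EuclideanSpace ℝ (Fin p), memR p X ∧
    r = pairSum m p X / gapSum m p X})⁻¹

/-- The functional F^p_{m,α} with confining quadratic potential. -/
def FFa (m χ α : ℝ) (p : ℕ) (X : EuclideanSpace ℝ (Fin p)) : ℝ :=
  FF m χ p X + α / 2 * ‖X‖ ^ 2

/-- H^N_{m+1}(Y) = |∇F^N_m(Y)|² − ((m−1) F^N_m(Y))². -/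
def Hfun (m χ : ℝ) (N : ℕ) (Y : EuclideanSpace ℝ (Fin N)) : ℝ :=
  ‖gradient (FF m χ N) Y‖ ^ 2 - ((m - 1) * FF m χ N Y) ^ 2

/-- X : [0,T) → R^N is a solution of the gradient flow of F^N_m. -/
def isGFlow (m χ : ℝ) (N : ℕ) (T : ℝ) (X : ℝ → EuclideanSpace ℝ (Fin N)) : Prop :=
  ∀ t ∈ Set.Ico (0 : ℝ) T, memR N (X t) ∧
    HasDerivWithinAt X (-(gradient (FF m χ N) (X t))) (Set.Ico (0 : ℝ) T) t

/-- The gap Y_{i+1} - Y_i (0 if i+1 is out of range). -/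
def gapAt (N : ℕ) (Y : EuclideanSpace ℝ (Fin N)) (i : ℕ) : ℝ :=
  if h : i + 1 < N then Y ⟨i + 1, h⟩ - Y ⟨i, Nat.lt_of_succ_lt h⟩ else 0


open scoped BigOperators
open Finset Filter
namespace Stmt8


variable {a : ℝ}

/-- sum of gaps over the interval [i,j] -/
def sig (g : ℕ → ℝ) (i j : ℕ) : ℝ := ∑ k ∈ Finset.Icc i j, g k

def DD (a : ℝ) (q : ℕ) (g : ℕ → ℝ) : ℝ := ∑ k ∈ Finset.range q, g k ^ a

def NN (a : ℝ) (q : ℕ) (g : ℕ → ℝ) : ℝ :=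
  2 * ∑ i ∈ Finset.range q, ∑ j ∈ Finset.Ico i q, sig g i j ^ a

def Pos (q : ℕ) (g : ℕ → ℝ) : Prop := ∀ k < q, 0 < g k

lemma sig_pos {q : ℕ} {g : ℕ → ℝ} (hg : Pos q g) {i j : ℕ} (hij : i ≤ j) (hj : j < q) :
    0 < sig g i j := by
  refine Finset.sum_pos (fun k hk => ?_) ⟨i, by simp [hij]⟩
  simp only [Finset.mem_Icc] at hk
  exact hg k (lt_of_le_of_lt hk.2 hj)

lemma gap_le_sig {q : ℕ} {g : ℕ → ℝ} (hg : Pos q g) {i j k : ℕ} (hik : i ≤ k) (hkj : k ≤ j)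
    (hj : j < q) : g k ≤ sig g i j := by
  refine Finset.single_le_sum (fun l hl => (hg l ?_).le) (by simp [hik, hkj])
  simp only [Finset.mem_Icc] at hl
  exact lt_of_le_of_lt hl.2 hj

lemma DD_pos {q : ℕ} {g : ℕ → ℝ} (hq : 1 ≤ q) (hg : Pos q g) : 0 < DD a q g := by
  refine Finset.sum_pos (fun k hk => Real.rpow_pos_of_pos (hg k (Finset.mem_range.mp hk)) a)
    ⟨0, by simp; omega⟩

lemma NN_pos {q : ℕ} {g : ℕ → ℝ} (hq : 1 ≤ q) (hg : Pos q g) : 0 < NN a q g := by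
  have : 0 < ∑ i ∈ Finset.range q, ∑ j ∈ Finset.Ico i q, sig g i j ^ a := by
    refine Finset.sum_pos (fun i hi => ?_) ⟨0, by simp; omega⟩
    simp only [Finset.mem_range] at hi
    refine Finset.sum_pos (fun j hj => ?_) ⟨i, by simp [hi]⟩
    simp only [Finset.mem_Ico] at hj
    exact Real.rpow_pos_of_pos (sig_pos hg hj.1 hj.2) a
  unfold NN; linarith [this]

lemma NN_nonneg {q : ℕ} {g : ℕ → ℝ} (hg : Pos q g) : 0 ≤ NN a q g := by
  have : 0 ≤ ∑ i ∈ Finset.range q, ∑ j ∈ Finset.Ico i q, sig g i j ^ a := by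
    refine Finset.sum_nonneg fun i hi => Finset.sum_nonneg fun j hj => ?_
    simp only [Finset.mem_Ico] at hj
    exact (Real.rpow_pos_of_pos (sig_pos hg hj.1 hj.2) a).le
  unfold NN; linarith [this]

lemma NN_le (ha : a < 0) {q : ℕ} {g : ℕ → ℝ} (hg : Pos q g) :
    NN a q g ≤ 2 * q * DD a q g := by
  have h1 : ∀ i ∈ Finset.range q, ∑ j ∈ Finset.Ico i q, sig g i j ^ a ≤ (q : ℝ) * g i ^ a := by
    intro i hi
    simp only [Finset.mem_range] at hi
    calc ∑ j ∈ Finset.Ico i q, sig g i j ^ a ≤ ∑ j ∈ Finset.Ico i q, g i ^ a := by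
          refine Finset.sum_le_sum fun j hj => ?_
          simp only [Finset.mem_Ico] at hj
          exact Real.rpow_le_rpow_of_nonpos (hg i hi) (gap_le_sig hg le_rfl hj.1 hj.2) ha.le
      _ = ((Finset.Ico i q).card : ℝ) * g i ^ a := by
          rw [Finset.sum_const, nsmul_eq_mul]
      _ ≤ (q : ℝ) * g i ^ a := by
          have : (Finset.Ico i q).card ≤ q := by
            rw [Nat.card_Ico]; omega
          exact mul_le_mul_of_nonneg_right (by exact_mod_cast this)
            (Real.rpow_pos_of_pos (hg i hi) a).le
  calc NN a q g ≤ 2 * ∑ i ∈ Finset.range q, (q : ℝ) * g i ^ a := by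
        unfold NN
        have := Finset.sum_le_sum h1
        linarith [this]
    _ = 2 * q * DD a q g := by
        unfold DD; rw [← Finset.mul_sum]; ring


lemma sig_congr {q : ℕ} {g g' : ℕ → ℝ} (h : ∀ k < q, g k = g' k) {i j : ℕ} (hj : j < q) :
    sig g i j = sig g' i j :=
  Finset.sum_congr rfl fun k hk => h k (lt_of_le_of_lt (Finset.mem_Icc.mp hk).2 hj)

lemma DD_congr {q : ℕ} {g g' : ℕ → ℝ} (h : ∀ k < q, g k = g' k) : DD a q g = DD a q g' :=
  Finset.sum_congr rfl fun k hk => by rw [h k (Finset.mem_range.mp hk)]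

lemma NN_congr {q : ℕ} {g g' : ℕ → ℝ} (h : ∀ k < q, g k = g' k) : NN a q g = NN a q g' := by
  unfold NN
  congr 1
  refine Finset.sum_congr rfl fun i hi => Finset.sum_congr rfl fun j hj => ?_
  rw [sig_congr h (Finset.mem_Ico.mp hj).2]

lemma sig_smul (c : ℝ) (g : ℕ → ℝ) (i j : ℕ) :
    sig (fun k => c * g k) i j = c * sig g i j := by
  unfold sig; rw [Finset.mul_sum]

lemma DD_smul {c : ℝ} (hc : 0 ≤ c) {q : ℕ} {g : ℕ → ℝ} (hg : Pos q g) :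
    DD a q (fun k => c * g k) = c ^ a * DD a q g := by
  unfold DD
  rw [Finset.mul_sum]
  refine Finset.sum_congr rfl fun k hk => ?_
  rw [Real.mul_rpow hc (hg k (Finset.mem_range.mp hk)).le]

lemma NN_smul {c : ℝ} (hc : 0 ≤ c) {q : ℕ} {g : ℕ → ℝ} (hg : Pos q g) :
    NN a q (fun k => c * g k) = c ^ a * NN a q g := by
  unfold NN
  have h : ∀ i ∈ Finset.range q, ∑ j ∈ Finset.Ico i q, sig (fun k => c * g k) i j ^ a
      = c ^ a * ∑ j ∈ Finset.Ico i q, sig g i j ^ a := by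
    intro i hi
    rw [Finset.mul_sum]
    refine Finset.sum_congr rfl fun j hj => ?_
    simp only [Finset.mem_Ico] at hj
    rw [sig_smul, Real.mul_rpow hc (sig_pos hg hj.1 hj.2).le]
  rw [Finset.sum_congr rfl h, ← Finset.mul_sum]
  ring

def Ss (a : ℝ) (q : ℕ) : Set ℝ := {r | ∃ g, Pos q g ∧ r = NN a q g / DD a q g}

def sc (a : ℝ) (q : ℕ) : ℝ := sSup (Ss a q)

lemma one_mem_Pos (q : ℕ) : Pos q (fun _ => (1:ℝ)) := fun _ _ => one_pos

lemma Ss_nonempty (q : ℕ) : (Ss a q).Nonempty :=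
  ⟨_, (fun _ => (1:ℝ)), one_mem_Pos q, rfl⟩

lemma ratio_le_2q (ha : a < 0) {q : ℕ} (hq : 1 ≤ q) {g : ℕ → ℝ} (hg : Pos q g) :
    NN a q g / DD a q g ≤ 2 * q := by
  rw [div_le_iff₀ (DD_pos hq hg)]
  exact NN_le ha hg

lemma Ss_bddAbove (ha : a < 0) {q : ℕ} (hq : 1 ≤ q) : BddAbove (Ss a q) := by
  refine ⟨2 * q, fun r hr => ?_⟩
  obtain ⟨g, hg, rfl⟩ := hr
  exact ratio_le_2q ha hq hg

lemma ratio_le_sc (ha : a < 0) {q : ℕ} (hq : 1 ≤ q) {g : ℕ → ℝ} (hg : Pos q g) :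
    NN a q g / DD a q g ≤ sc a q :=
  le_csSup (Ss_bddAbove ha hq) ⟨g, hg, rfl⟩

lemma sc_le_2q (ha : a < 0) {q : ℕ} (hq : 1 ≤ q) : sc a q ≤ 2 * q :=
  csSup_le (Ss_nonempty q) (fun r hr => by obtain ⟨g, hg, rfl⟩ := hr; exact ratio_le_2q ha hq hg)

lemma sc_pos (ha : a < 0) {q : ℕ} (hq : 1 ≤ q) : 0 < sc a q :=
  lt_of_lt_of_le (div_pos (NN_pos hq (one_mem_Pos q)) (DD_pos hq (one_mem_Pos q)))
    (ratio_le_sc ha hq (one_mem_Pos q))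

lemma ratio_smul_eq (ha : a < 0) {c : ℝ} (hc : 0 < c) {q : ℕ} {g : ℕ → ℝ} (hg : Pos q g) :
    NN a q (fun k => c * g k) / DD a q (fun k => c * g k) = NN a q g / DD a q g := by
  rw [NN_smul hc.le hg, DD_smul hc.le hg,
    mul_div_mul_left _ _ (ne_of_gt (Real.rpow_pos_of_pos hc a))]


lemma exists_G (ha : a < 0) {q : ℕ} (hq : 1 ≤ q) {L : ℝ} (hL : 0 < L) :
    ∃ G : ℝ, 0 < G ∧ 1 - 1/(q:ℝ) < ((L + G)/G) ^ a := by
  have hq' : (0:ℝ) < q := by exact_mod_cast hq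
  have h1 : Tendsto (fun G : ℝ => (L + G)/G) atTop (nhds 1) := by
    have h0 : Tendsto (fun G : ℝ => L / G) atTop (nhds 0) :=
      tendsto_id.const_div_atTop L
    have h0' := h0.add_const 1
    rw [zero_add] at h0'
    refine h0'.congr' ?_
    filter_upwards [eventually_gt_atTop (0:ℝ)] with G hG
    field_simp
  have h2 : Tendsto (fun G : ℝ => ((L + G)/G) ^ a) atTop (nhds 1) := by
    have hc : ContinuousAt (fun x : ℝ => x ^ a) 1 :=
      Real.continuousAt_rpow_const 1 a (Or.inl one_ne_zero)
    have := hc.tendsto.comp h1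
    rwa [Real.one_rpow] at this
  have h3 : 1 - 1/(q:ℝ) < 1 := by
    have : (0:ℝ) < 1/(q:ℝ) := by positivity
    linarith
  obtain ⟨G, hG⟩ := ((h2.eventually (eventually_gt_nhds h3)).and (eventually_gt_atTop 0)).exists
  exact ⟨G, hG.2, hG.1⟩

lemma append (ha : a < 0) {q : ℕ} (hq : 1 ≤ q) {g : ℕ → ℝ} (hg : Pos q g) :
    ∃ g' : ℕ → ℝ, Pos (q+1) g' ∧ NN a q g / DD a q g < NN a (q+1) g' / DD a (q+1) g' := by
  classical
  set L := sig g 0 (q-1) with hLdef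
  have hq1 : q - 1 < q := by omega
  have hL : 0 < L := sig_pos hg (Nat.zero_le _) hq1
  obtain ⟨G, hG0, hx⟩ := exists_G ha hq hL
  set g' : ℕ → ℝ := fun k => if k = q then G else g k with hg'def
  have hpos' : Pos (q+1) g' := by
    intro k hk
    by_cases h : k = q
    · simp [hg'def, h, hG0]
    · have : k < q := by omega
      simp only [hg'def, if_neg h]
      exact hg k this
  have hagree : ∀ k < q, g' k = g k := by
    intro k hk; simp only [hg'def, if_neg (by omega : k ≠ q)]
  have hagree' : ∀ k < q, g k = g' k := fun k hk => (hagree k hk).symm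
  refine ⟨g', hpos', ?_⟩
  -- compute DD
  have hDsplit : DD a (q+1) g' = DD a q g + G ^ a := by
    unfold DD
    rw [Finset.sum_range_succ]
    congr 1
    · exact Finset.sum_congr rfl fun k hk => by
        rw [hagree k (Finset.mem_range.mp hk)]
    · simp [hg'def]
  -- compute NN
  have hsigq : ∀ i < q, sig g' i q = sig g i (q-1) + G := by
    intro i hi
    have : sig g' i q = sig g' i (q-1) + g' q := by
      unfold sig
      have hq' : q = (q-1) + 1 := by omega
      rw [hq']
      rw [Finset.sum_Icc_succ_top (by omega : i ≤ (q-1)+1)]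
      rw [← hq']
    rw [this, sig_congr hagree hq1]
    simp [hg'def]
  have hNsplit : NN a (q+1) g' =
      NN a q g + (2 * G ^ a + 2 * ∑ i ∈ Finset.range q, (sig g i (q-1) + G) ^ a) := by
    unfold NN
    rw [Finset.sum_range_succ]
    have hlast : ∑ j ∈ Finset.Ico q (q+1), sig g' q j ^ a = G ^ a := by
      rw [Finset.Ico_add_one_right_eq_Icc, Finset.Icc_self, Finset.sum_singleton]
      unfold sig
      simp [hg'def]
    rw [hlast]
    have hrow : ∀ i ∈ Finset.range q,
        ∑ j ∈ Finset.Ico i (q+1), sig g' i j ^ a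
          = (∑ j ∈ Finset.Ico i q, sig g i j ^ a) + (sig g i (q-1) + G) ^ a := by
      intro i hi
      simp only [Finset.mem_range] at hi
      rw [Finset.sum_Ico_succ_top hi.le]
      congr 1
      · refine Finset.sum_congr rfl fun j hj => ?_
        rw [sig_congr hagree (Finset.mem_Ico.mp hj).2]
      · rw [hsigq i hi]
    rw [Finset.sum_congr rfl hrow, Finset.sum_add_distrib]
    ring
  -- estimates
  have hGa : 0 < G ^ a := Real.rpow_pos_of_pos hG0 a
  have hD : 0 < DD a q g := DD_pos hq hg
  have hN : 0 < NN a q g := NN_pos hq hg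
  have hNle : NN a q g ≤ 2 * q * DD a q g := NN_le ha hg
  set n : ℝ := 2 * G ^ a + 2 * ∑ i ∈ Finset.range q, (sig g i (q-1) + G) ^ a with hndef
  have hLGa : 0 < (L + G) ^ a := Real.rpow_pos_of_pos (by linarith) a
  have hsum_ge : (q : ℝ) * (L + G) ^ a ≤ ∑ i ∈ Finset.range q, (sig g i (q-1) + G) ^ a := by
    have : ∀ i ∈ Finset.range q, (L + G) ^ a ≤ (sig g i (q-1) + G) ^ a := by
      intro i hi
      have hτL : sig g i (q-1) ≤ L := by
        refine Finset.sum_le_sum_of_subset_of_nonneg ?_ (fun k hk _ => ?_)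
        · exact Finset.Icc_subset_Icc_left (Nat.zero_le _)
        · simp only [Finset.mem_Icc] at hk
          exact (hg k (lt_of_le_of_lt hk.2 hq1)).le
      have hτpos : 0 < sig g i (q-1) + G := by
        by_cases hiq : i ≤ q - 1
        · linarith [sig_pos hg hiq hq1]
        · -- i > q-1 impossible? i < q so i ≤ q-1
          exfalso; simp only [Finset.mem_range] at hi; omega
      exact Real.rpow_le_rpow_of_nonpos hτpos (by linarith) ha.le
    calc (q : ℝ) * (L + G) ^ a = ∑ _i ∈ Finset.range q, (L + G) ^ a := by
          rw [Finset.sum_const, Finset.card_range, nsmul_eq_mul]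
      _ ≤ _ := Finset.sum_le_sum this
  have hxmul : ((L + G)/G) ^ a * G ^ a = (L + G) ^ a := by
    rw [Real.div_rpow (by linarith) hG0.le]
    field_simp
  have hq' : (0:ℝ) < q := by exact_mod_cast hq
  have hstep1 : 2 * (q:ℝ) * G ^ a < n := by
    have h1 : (q:ℝ) - 1 < (q:ℝ) * ((L + G)/G) ^ a := by
      have := mul_lt_mul_of_pos_left hx hq'
      rw [mul_sub, mul_one_div, div_self (ne_of_gt hq')] at this
      linarith
    have h2 : ((q:ℝ) - 1) * G ^ a < (q:ℝ) * (L + G) ^ a := by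
      calc ((q:ℝ) - 1) * G ^ a < ((q:ℝ) * ((L + G)/G) ^ a) * G ^ a :=
            mul_lt_mul_of_pos_right h1 hGa
        _ = (q:ℝ) * (L + G) ^ a := by rw [mul_assoc, hxmul]
    have h3 : (q:ℝ) * (L+G)^a ≤ ∑ i ∈ Finset.range q, (sig g i (q-1) + G) ^ a := hsum_ge
    rw [hndef]
    nlinarith
  -- conclude
  rw [hDsplit, hNsplit]
  rw [div_lt_div_iff₀ hD (by linarith)]
  have hcross : NN a q g * G ^ a < n * DD a q g := by
    calc NN a q g * G ^ a ≤ (2 * q * DD a q g) * G ^ a := mul_le_mul_of_nonneg_right hNle hGa.le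
      _ = (2 * (q:ℝ) * G ^ a) * DD a q g := by ring
      _ < n * DD a q g := mul_lt_mul_of_pos_right hstep1 hD
  nlinarith

lemma sc_lt_succ_of_attained (ha : a < 0) {q : ℕ} (hq : 1 ≤ q) {g : ℕ → ℝ} (hg : Pos q g)
    (hmax : NN a q g / DD a q g = sc a q) : sc a q < sc a (q+1) := by
  obtain ⟨g', hg', hlt⟩ := append ha hq hg
  calc sc a q = NN a q g / DD a q g := hmax.symm
    _ < NN a (q+1) g' / DD a (q+1) g' := hlt
    _ ≤ sc a (q+1) := ratio_le_sc ha (by omega) hg'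

lemma sc_mono (ha : a < 0) {l q : ℕ} (hl : 1 ≤ l) (hlq : l ≤ q) : sc a l ≤ sc a q := by
  induction q with
  | zero => omega
  | succ n ih =>
    rcases Nat.lt_or_ge l (n+1) with h | h
    · have h1 : sc a l ≤ sc a n := ih (by omega)
      have h2 : sc a n ≤ sc a (n+1) := by
        refine csSup_le (Ss_nonempty n) fun r hr => ?_
        obtain ⟨g, hg, rfl⟩ := hr
        obtain ⟨g', hg', hlt⟩ := append ha (by omega) hg
        exact le_of_lt (lt_of_lt_of_le hlt (ratio_le_sc ha (by omega) hg'))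
      linarith
    · have : l = n + 1 := by omega
      rw [this]


lemma sig_shift (g : ℕ → ℝ) (c i j : ℕ) :
    sig (fun t => g (t + c)) i j = sig g (i + c) (j + c) := by
  unfold sig
  rw [← Finset.Ico_add_one_right_eq_Icc, ← Finset.Ico_add_one_right_eq_Icc,
    Finset.sum_Ico_eq_sum_range, Finset.sum_Ico_eq_sum_range]
  rw [show j + c + 1 - (i + c) = j + 1 - i from by omega]
  exact Finset.sum_congr rfl fun t _ => congrArg g (by omega)

lemma right_block (a : ℝ) (g : ℕ → ℝ) {c q : ℕ} (hc : c ≤ q) :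
    ∑ i ∈ Finset.Ico c q, ∑ j ∈ Finset.Ico i q, sig g i j ^ a
      = ∑ i ∈ Finset.range (q - c), ∑ j ∈ Finset.Ico i (q - c),
          sig (fun t => g (t + c)) i j ^ a := by
  rw [Finset.sum_Ico_eq_sum_range]
  refine Finset.sum_congr rfl fun i' _ => ?_
  rw [Finset.sum_Ico_eq_sum_range, Finset.sum_Ico_eq_sum_range]
  rw [show q - (c + i') = q - c - i' from by omega]
  refine Finset.sum_congr rfl fun t _ => ?_
  rw [sig_shift]
  have e1 : i' + c = c + i' := by omega
  have e2 : i' + t + c = c + i' + t := by omega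
  rw [e1, e2]

lemma cluster_bound (ha : a < 0) {q : ℕ} (hq : 2 ≤ q) {g : ℕ → ℝ} (hg : Pos q g)
    (hle : ∀ k < q, g k ≤ 1) {ks : ℕ} (hks : ks < q) (h1 : g ks = 1) :
    NN a q g ≤ sc a (q-1) * DD a q g + 2 * q^2 := by
  have hscpos : 0 < sc a (q-1) := sc_pos ha (by omega)
  have hTnonneg : ∀ i j : ℕ, i ≤ j → j < q → 0 ≤ sig g i j ^ a := fun i j hij hj =>
    (Real.rpow_pos_of_pos (sig_pos hg hij hj) a).le
  have hT1 : ∀ i j : ℕ, i ≤ ks → ks ≤ j → j < q → sig g i j ^ a ≤ 1 := by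
    intro i j hi hj hjq
    refine Real.rpow_le_one_of_one_le_of_nonpos ?_ ha.le
    calc (1:ℝ) = g ks := h1.symm
      _ ≤ sig g i j := gap_le_sig hg hi hj hjq
  -- mid row bound : for i ≤ ks, the partial inner sum over j ∈ Ico ks q is ≤ q
  have hmid : ∀ i : ℕ, i ≤ ks → ∑ j ∈ Finset.Ico ks q, sig g i j ^ a ≤ (q:ℝ) := by
    intro i hi
    calc ∑ j ∈ Finset.Ico ks q, sig g i j ^ a ≤ ∑ _j ∈ Finset.Ico ks q, (1:ℝ) :=
          Finset.sum_le_sum fun j hj => by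
            obtain ⟨hj1, hj2⟩ := Finset.mem_Ico.mp hj
            exact hT1 i j hi hj1 hj2
      _ = ((Finset.Ico ks q).card : ℝ) := by rw [Finset.sum_const]; simp
      _ ≤ (q:ℝ) := by
          have : (Finset.Ico ks q).card ≤ q := by rw [Nat.card_Ico]; omega
          exact_mod_cast this
  -- decompose the double sum
  set S := ∑ i ∈ Finset.range q, ∑ j ∈ Finset.Ico i q, sig g i j ^ a with hSdef
  have hNS : NN a q g = 2 * S := rfl
  -- left block
  set SL := ∑ i ∈ Finset.range ks, ∑ j ∈ Finset.Ico i ks, sig g i j ^ a with hSLdef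
  set SR := ∑ i ∈ Finset.Ico (ks+1) q, ∑ j ∈ Finset.Ico i q, sig g i j ^ a with hSRdef
  have hsplit : S ≤ SL + SR + (q:ℝ) * q := by
    have e1 : S = ∑ i ∈ Finset.range ks, (∑ j ∈ Finset.Ico i q, sig g i j ^ a)
        + ∑ i ∈ Finset.Ico ks q, ∑ j ∈ Finset.Ico i q, sig g i j ^ a := by
      rw [hSdef, Finset.range_eq_Ico, ← Finset.sum_Ico_consecutive _ (Nat.zero_le ks) hks.le, Finset.range_eq_Ico]
    have e2 : ∀ i ∈ Finset.range ks, ∑ j ∈ Finset.Ico i q, sig g i j ^ a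
        = (∑ j ∈ Finset.Ico i ks, sig g i j ^ a) + ∑ j ∈ Finset.Ico ks q, sig g i j ^ a := by
      intro i hi
      have hi' : i ≤ ks := (Finset.mem_range.mp hi).le
      rw [← Finset.sum_Ico_consecutive _ hi' hks.le]
    have e3 : ∑ i ∈ Finset.Ico ks q, ∑ j ∈ Finset.Ico i q, sig g i j ^ a
        = (∑ j ∈ Finset.Ico ks q, sig g ks j ^ a) + SR := by
      rw [Finset.sum_eq_sum_Ico_succ_bot hks]
    -- assemble
    rw [e1, Finset.sum_congr rfl e2, Finset.sum_add_distrib, e3]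
    have b1 : ∑ i ∈ Finset.range ks, ∑ j ∈ Finset.Ico ks q, sig g i j ^ a
        ≤ ∑ _i ∈ Finset.range ks, (q:ℝ) :=
      Finset.sum_le_sum fun i hi => hmid i (Finset.mem_range.mp hi).le
    have b2 : ∑ j ∈ Finset.Ico ks q, sig g ks j ^ a ≤ (q:ℝ) := hmid ks le_rfl
    have b3 : ((ks:ℝ)) * q + q ≤ (q:ℝ) * q := by
      have hksq : (ks:ℝ) + 1 ≤ q := by exact_mod_cast hks
      nlinarith [hksq, show (0:ℝ) ≤ q from Nat.cast_nonneg q]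
    have b1' : ∑ _i ∈ Finset.range ks, (q:ℝ) = (ks:ℝ) * q := by
      rw [Finset.sum_const, Finset.card_range, nsmul_eq_mul]
    linarith [b1, b2, b1', b3]
  -- bound SL
  have hSL : 2 * SL ≤ sc a (q-1) * DD a ks g := by
    rcases Nat.eq_zero_or_pos ks with h0 | hpos
    · subst h0
      simp only [hSLdef, Finset.range_zero, Finset.sum_empty, mul_zero]
      have : 0 ≤ DD a 0 g := by unfold DD; simp
      nlinarith
    · have hgks : Pos ks g := fun k hk => hg k (by omega)
      have h2SL : 2 * SL = NN a ks g := rfl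
      have hr : NN a ks g / DD a ks g ≤ sc a ks := ratio_le_sc ha hpos hgks
      have hDks : 0 < DD a ks g := DD_pos hpos hgks
      have hsc : sc a ks ≤ sc a (q-1) := sc_mono ha hpos (by omega)
      rw [div_le_iff₀ hDks] at hr
      calc 2 * SL = NN a ks g := h2SL
        _ ≤ sc a ks * DD a ks g := hr
        _ ≤ sc a (q-1) * DD a ks g := mul_le_mul_of_nonneg_right hsc hDks.le
  -- bound SR
  set qR := q - (ks + 1) with hqRdef
  set h : ℕ → ℝ := fun t => g (t + (ks+1)) with hhdef
  have hSR : 2 * SR ≤ sc a (q-1) * DD a qR h := by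
    have hSReq : SR = ∑ i ∈ Finset.range qR, ∑ j ∈ Finset.Ico i qR, sig h i j ^ a := by
      rw [hSRdef, right_block a g (by omega : ks + 1 ≤ q)]
    rcases Nat.eq_zero_or_pos qR with h0 | hpos
    · rw [hSReq, h0]
      simp only [Finset.range_zero, Finset.sum_empty, mul_zero]
      have : 0 ≤ DD a 0 h := by unfold DD; simp
      nlinarith
    · have hgh : Pos qR h := fun k hk => hg (k + (ks+1)) (by omega)
      have h2SR : 2 * SR = NN a qR h := by rw [hSReq]; rfl
      have hr : NN a qR h / DD a qR h ≤ sc a qR := ratio_le_sc ha hpos hgh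
      have hDh : 0 < DD a qR h := DD_pos hpos hgh
      have hsc : sc a qR ≤ sc a (q-1) := sc_mono ha hpos (by omega)
      rw [div_le_iff₀ hDh] at hr
      calc 2 * SR = NN a qR h := h2SR
        _ ≤ sc a qR * DD a qR h := hr
        _ ≤ sc a (q-1) * DD a qR h := mul_le_mul_of_nonneg_right hsc hDh.le
  -- DD decomposition
  have hDD : DD a ks g + DD a qR h ≤ DD a q g := by
    have e : DD a qR h = ∑ k ∈ Finset.Ico (ks+1) q, g k ^ a := by
      unfold DD
      rw [Finset.sum_Ico_eq_sum_range]
      rw [show q - (ks+1) = qR from rfl]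
      refine Finset.sum_congr rfl fun t _ => ?_
      show g (t + (ks+1)) ^ a = g (ks + 1 + t) ^ a
      rw [Nat.add_comm t (ks+1)]
    rw [e]
    unfold DD
    have hsub : Finset.range ks ∪ Finset.Ico (ks+1) q ⊆ Finset.range q := by
      intro x hx
      simp only [Finset.mem_union, Finset.mem_range, Finset.mem_Ico] at hx ⊢
      omega
    have hdisj : Disjoint (Finset.range ks) (Finset.Ico (ks+1) q) := by
      rw [Finset.disjoint_left]
      intro x hx hx'
      simp only [Finset.mem_range] at hx
      simp only [Finset.mem_Ico] at hx'
      omega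
    rw [← Finset.sum_union hdisj]
    refine Finset.sum_le_sum_of_subset_of_nonneg hsub fun k hk _ => ?_
    exact (Real.rpow_pos_of_pos (hg k (Finset.mem_range.mp hk)) a).le
  -- assemble
  have final : NN a q g ≤ sc a (q-1) * (DD a ks g + DD a qR h) + 2 * ((q:ℝ) * q) := by
    rw [hNS]
    calc 2 * S ≤ 2 * (SL + SR + (q:ℝ)*q) := by linarith
      _ = 2 * SL + 2 * SR + 2 * ((q:ℝ)*q) := by ring
      _ ≤ sc a (q-1) * DD a ks g + sc a (q-1) * DD a qR h + 2 * ((q:ℝ)*q) := by linarith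
      _ = sc a (q-1) * (DD a ks g + DD a qR h) + 2 * ((q:ℝ)*q) := by ring
  have : sc a (q-1) * (DD a ks g + DD a qR h) ≤ sc a (q-1) * DD a q g :=
    mul_le_mul_of_nonneg_left hDD hscpos.le
  have hq2 : ((q:ℝ))*q = (q:ℝ)^2 := by ring
  calc NN a q g ≤ sc a (q-1) * DD a q g + 2*((q:ℝ)*q) := by linarith
    _ = sc a (q-1) * DD a q g + 2*(q:ℝ)^2 := by rw [hq2]


lemma ratio_one (ha : a < 0) {g : ℕ → ℝ} (hg : Pos 1 g) : NN a 1 g / DD a 1 g = 2 := by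
  have h0 : 0 < g 0 := hg 0 one_pos
  have hNN : NN a 1 g = 2 * g 0 ^ a := by
    unfold NN
    rw [Finset.sum_range_one]
    rw [show Finset.Ico 0 1 = {0} from rfl, Finset.sum_singleton]
    unfold sig
    rw [show Finset.Icc 0 0 = {0} from rfl, Finset.sum_singleton]
  have hDD : DD a 1 g = g 0 ^ a := by
    unfold DD; rw [Finset.sum_range_one]
  rw [hNN, hDD, mul_div_assoc, div_self (ne_of_gt (Real.rpow_pos_of_pos h0 a)), mul_one]

lemma sc_one (ha : a < 0) : sc a 1 = (2:ℝ) := by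
  refine le_antisymm ?_ ?_
  · refine csSup_le (Ss_nonempty 1) fun r hr => ?_
    obtain ⟨g, hg, rfl⟩ := hr
    rw [ratio_one ha hg]
  · have := ratio_le_sc ha le_rfl (one_mem_Pos 1)
    rwa [ratio_one ha (one_mem_Pos 1)] at this

lemma attained (ha : a < 0) : ∀ q, 1 ≤ q → ∃ g, Pos q g ∧ NN a q g / DD a q g = sc a q := by
  intro q
  induction q with
  | zero => omega
  | succ n ih =>
    intro _
    rcases Nat.eq_zero_or_pos n with h0 | hn
    · subst h0
      exact ⟨(fun _ => 1), one_mem_Pos 1, by rw [ratio_one ha (one_mem_Pos 1), sc_one ha]⟩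
    -- main case : n ≥ 1
    obtain ⟨gs, hgs, hgsmax⟩ := ih hn
    have hlt : sc a n < sc a (n+1) := sc_lt_succ_of_attained ha hn hgs hgsmax
    set Q' := n + 1 with hQ'def
    have hQ'1 : 1 ≤ Q' := by omega
    have hQ'2 : 2 ≤ Q' := by omega
    set ε : ℝ := sc a (n+1) - sc a n with hεdef
    have hε : 0 < ε := by simp only [hεdef]; linarith
    set C : ℝ := 2 * (Q':ℝ)^2 with hCdef
    have hC : 0 < C := by positivity
    set B : ℝ := C / ε + 1 with hBdef
    have hB1 : 1 < B := by
      have : 0 < C / ε := div_pos hC hε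
      simp only [hBdef]; linarith
    have hB0 : 0 < B := by linarith
    set μ₀ : ℝ := B ^ (1/a) with hμdef
    have hμpos : 0 < μ₀ := Real.rpow_pos_of_pos hB0 _
    have hμle1 : μ₀ ≤ 1 :=
      Real.rpow_le_one_of_one_le_of_nonpos hB1.le (by
        rw [one_div]
        exact (inv_nonpos.mpr ha.le))
    have hμa : μ₀ ^ a = B := by
      rw [hμdef, ← Real.rpow_mul hB0.le, one_div_mul_cancel ha.ne, Real.rpow_one]
    -- the compact set
    set K : Set (Fin Q' → ℝ) :=
      (Set.univ.pi fun _ => Set.Icc μ₀ 1) ∩ (⋃ k : Fin Q', {v | v k = 1}) with hKdef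
    have hKcomp : IsCompact K := by
      refine (isCompact_univ_pi fun _ => isCompact_Icc).inter_right ?_
      exact isClosed_iUnion_of_finite fun k => isClosed_eq (continuous_apply k) continuous_const
    have hKne : (fun _ => (1:ℝ)) ∈ K := by
      constructor
      · intro i _
        exact ⟨hμle1, le_rfl⟩
      · exact Set.mem_iUnion.mpr ⟨⟨0, by omega⟩, rfl⟩
    -- extension map
    set ext : (Fin Q' → ℝ) → (ℕ → ℝ) := fun v k => if h : k < Q' then v ⟨k, h⟩ else 1
      with hextdef
    have hext_val : ∀ (v : Fin Q' → ℝ) (k : ℕ) (h : k < Q'), ext v k = v ⟨k, h⟩ := by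
      intro v k h; simp only [hextdef, dif_pos h]
    have hext_cont : ∀ k : ℕ, Continuous (fun v : Fin Q' → ℝ => ext v k) := by
      intro k
      by_cases h : k < Q'
      · simp only [hextdef, dif_pos h]
        exact continuous_apply _
      · simp only [hextdef, dif_neg h]
        exact continuous_const
    have hPosK : ∀ v ∈ K, Pos Q' (ext v) := by
      intro v hv k hk
      rw [hext_val v k hk]
      have := hv.1 ⟨k, hk⟩ (Set.mem_univ _)
      exact lt_of_lt_of_le hμpos this.1
    -- continuity of the ratio on K
    have hsig_cont : ∀ i j : ℕ, Continuous (fun v : Fin Q' → ℝ => sig (ext v) i j) := by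
      intro i j
      unfold sig
      exact continuous_finset_sum _ fun k _ => hext_cont k
    have hNcont : ContinuousOn (fun v : Fin Q' → ℝ => NN a Q' (ext v)) K := by
      unfold NN
      refine continuousOn_const.mul (continuousOn_finset_sum _ fun i hi =>
        continuousOn_finset_sum _ fun j hj => ?_)
      refine ContinuousOn.rpow_const (hsig_cont i j).continuousOn fun v hv => Or.inl ?_
      simp only [Finset.mem_range] at hi
      obtain ⟨hj1, hj2⟩ := Finset.mem_Ico.mp hj
      exact ne_of_gt (sig_pos (hPosK v hv) hj1 hj2)
    have hDcont : ContinuousOn (fun v : Fin Q' → ℝ => DD a Q' (ext v)) K := by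
      unfold DD
      refine continuousOn_finset_sum _ fun k hk => ?_
      refine ContinuousOn.rpow_const (hext_cont k).continuousOn fun v hv => Or.inl ?_
      exact ne_of_gt (hPosK v hv k (Finset.mem_range.mp hk))
    have hφcont : ContinuousOn
        (fun v : Fin Q' → ℝ => NN a Q' (ext v) / DD a Q' (ext v)) K :=
      hNcont.div hDcont fun v hv => ne_of_gt (DD_pos hQ'1 (hPosK v hv))
    obtain ⟨vs, hvsK, hvsmax⟩ := hKcomp.exists_isMaxOn ⟨_, hKne⟩ hφcont
    set gstar := ext vs with hgstardef
    have hgstarpos : Pos Q' gstar := hPosK vs hvsK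
    set M : ℝ := NN a Q' gstar / DD a Q' gstar with hMdef
    refine ⟨gstar, hgstarpos, ?_⟩
    -- M ≤ sc
    have hMle : M ≤ sc a Q' := ratio_le_sc ha hQ'1 hgstarpos
    -- sc ≤ M
    set β : ℝ := sc a n + C / B with hβdef
    have hβlt : β < sc a (n+1) := by
      have h1 : C / B < ε := by
        rw [div_lt_iff₀ hB0, hBdef]
        have : ε * (C/ε) = C := by field_simp
        nlinarith
      simp only [hβdef, hεdef] at *
      linarith
    have hscle : sc a Q' ≤ max M β := by
      refine csSup_le (Ss_nonempty Q') fun r hr => ?_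
      obtain ⟨g, hgpos, rfl⟩ := hr
      -- normalize
      have hne : (Finset.range Q').Nonempty := ⟨0, by simp [hQ'def]⟩
      set Mx : ℝ := (Finset.range Q').sup' hne g with hMxdef
      obtain ⟨ks, hksmem, hks⟩ := Finset.exists_mem_eq_sup' hne g
      have hksQ : ks < Q' := Finset.mem_range.mp hksmem
      have hMxpos : 0 < Mx := by
        rw [hMxdef, hks]
        exact hgpos ks hksQ
      set c : ℝ := 1 / Mx with hcdef
      have hcpos : 0 < c := by positivity
      set gg : ℕ → ℝ := fun k => c * g k with hggdef
      have hggpos : Pos Q' gg := fun k hk => mul_pos hcpos (hgpos k hk)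
      have hratio : NN a Q' g / DD a Q' g = NN a Q' gg / DD a Q' gg :=
        (ratio_smul_eq ha hcpos hgpos).symm
      have hggle1 : ∀ k < Q', gg k ≤ 1 := by
        intro k hk
        have hle : g k ≤ Mx := Finset.le_sup' g (Finset.mem_range.mpr hk)
        show c * g k ≤ 1
        have he : c * g k = g k / Mx := by rw [hcdef]; ring
        rw [he]
        exact (div_le_one hMxpos).mpr hle
      have hggks : gg ks = 1 := by
        show c * g ks = 1
        have hgks : g ks = Mx := by rw [hMxdef, hks]
        rw [hcdef, hgks]
        field_simp
      by_cases hcase : ∀ k, k < Q' → μ₀ ≤ gg k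
      · -- inside the compact set
        set v : Fin Q' → ℝ := fun k => gg (k : ℕ) with hvdef
        have hvK : v ∈ K := by
          constructor
          · intro i _
            exact ⟨hcase i i.isLt, hggle1 i i.isLt⟩
          · exact Set.mem_iUnion.mpr ⟨⟨ks, hksQ⟩, hggks⟩
        have hextv : ∀ k < Q', ext v k = gg k := by
          intro k hk
          rw [hext_val v k hk]
        have : NN a Q' (ext v) / DD a Q' (ext v) = NN a Q' gg / DD a Q' gg := by
          rw [NN_congr hextv, DD_congr hextv]
        refine le_max_of_le_left ?_
        rw [hratio, ← this, hMdef, hgstardef]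
        exact hvsmax hvK
      · -- small gap present : cluster bound
        push_neg at hcase
        obtain ⟨k0, hk0Q, hk0⟩ := hcase
        have hclust := cluster_bound ha hQ'2 hggpos hggle1 hksQ hggks
        have hDgg : 0 < DD a Q' gg := DD_pos hQ'1 hggpos
        have hDB : B < DD a Q' gg := by
          have h1 : μ₀ ^ a < gg k0 ^ a :=
            Real.rpow_lt_rpow_of_neg (hggpos k0 hk0Q) hk0 ha
          have h2 : gg k0 ^ a ≤ DD a Q' gg := by
            unfold DD
            exact Finset.single_le_sum (f := fun k => gg k ^ a)
              (fun k hk => (Real.rpow_pos_of_pos (hggpos k (Finset.mem_range.mp hk)) a).le)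
              (Finset.mem_range.mpr hk0Q)
          rw [← hμa]
          linarith
        refine le_max_of_le_right ?_
        rw [hratio, div_le_iff₀ hDgg]
        have hQn : Q' - 1 = n := by omega
        rw [hQn] at hclust
        have h3 : C ≤ (C / B) * DD a Q' gg := by
          have := mul_le_mul_of_nonneg_left hDB.le (le_of_lt (div_pos hC hB0))
          calc C = (C / B) * B := by field_simp
            _ ≤ (C / B) * DD a Q' gg := this
        calc NN a Q' gg ≤ sc a n * DD a Q' gg + C := by
              rw [hCdef]; exact_mod_cast hclust
          _ ≤ sc a n * DD a Q' gg + (C / B) * DD a Q' gg := by linarith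
          _ = β * DD a Q' gg := by rw [hβdef]; ring
    -- combine
    rcases max_cases M β with ⟨hmax, _⟩ | ⟨hmax, _⟩
    · rw [hmax] at hscle
      exact le_antisymm hMle hscle
    · rw [hmax] at hscle
      exfalso
      rw [hQ'def] at hscle
      linarith


/-- The Euler–Lagrange sum : sum over pairs containing gap k. -/
def EE (a : ℝ) (q : ℕ) (g : ℕ → ℝ) (k : ℕ) : ℝ :=
  ∑ i ∈ Finset.range q, ∑ j ∈ Finset.Ico i q,
    (if i ≤ k ∧ k ≤ j then sig g i j ^ (a-1) else 0)

lemma euler_lagrange (ha : a < 0) {q : ℕ} (hq : 1 ≤ q) {g : ℕ → ℝ} (hg : Pos q g)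
    (hmax : NN a q g / DD a q g = sc a q) {k : ℕ} (hk : k < q) :
    2 * EE a q g k = sc a q * g k ^ (a-1) := by
  classical
  set t0 : ℝ := g k with ht0def
  have ht0 : 0 < t0 := hg k hk
  set s : ℝ := sc a q with hsdef
  have hD0 : 0 < DD a q g := DD_pos hq hg
  have hN0 : NN a q g = s * DD a q g := by
    rw [← hmax]; field_simp
  -- the update function
  set upd : ℝ → (ℕ → ℝ) := fun t => Function.update g k t with hupddef
  have hupd_apply : ∀ (t : ℝ) (l : ℕ), upd t l = if l = k then t else g l := by
    intro t l
    simp [hupddef, Function.update_apply]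
  have hupd_pos : ∀ t : ℝ, 0 < t → Pos q (upd t) := by
    intro t ht l hl
    rw [hupd_apply]
    split_ifs
    · exact ht
    · exact hg l hl
  have hupd_t0 : upd t0 = g := by
    rw [hupddef, ht0def]
    exact Function.update_eq_self k g
  -- sig of update
  have hsig_upd : ∀ (t : ℝ) (i j : ℕ), j < q →
      sig (upd t) i j = if i ≤ k ∧ k ≤ j then sig g i j - g k + t else sig g i j := by
    intro t i j hj
    by_cases hmem : i ≤ k ∧ k ≤ j
    · rw [if_pos hmem]
      have hkmem : k ∈ Finset.Icc i j := Finset.mem_Icc.mpr hmem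
      unfold sig
      rw [hupddef]
      rw [Finset.sum_update_of_mem hkmem]
      have : ∑ l ∈ Finset.Icc i j \ {k}, g l = (∑ l ∈ Finset.Icc i j, g l) - g k := by
        rw [Finset.sum_sdiff_eq_sub (Finset.singleton_subset_iff.mpr hkmem),
          Finset.sum_singleton]
      rw [this]
      ring
    · rw [if_neg hmem]
      have hkmem : k ∉ Finset.Icc i j := fun hc => hmem (Finset.mem_Icc.mp hc)
      unfold sig
      rw [hupddef]
      refine Finset.sum_congr rfl fun l hl => ?_
      have hlk : l ≠ k := fun he => hkmem (he ▸ hl)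
      exact Function.update_of_ne hlk t g
  -- derivative of D
  have hDk : HasDerivAt (fun t => DD a q (upd t)) (a * t0 ^ (a-1)) t0 := by
    have h1 : ∀ l ∈ Finset.range q,
        HasDerivAt (fun t => (upd t l) ^ a)
          (if l = k then a * t0 ^ (a-1) else 0) t0 := by
      intro l hl
      by_cases hlk : l = k
      · subst hlk
        have : (fun t => (upd t l) ^ a) = fun t => t ^ a := by
          funext t; rw [hupd_apply, if_pos rfl]
        rw [this, if_pos rfl]
        exact Real.hasDerivAt_rpow_const (Or.inl (ne_of_gt ht0))
      · have : (fun t => (upd t l) ^ a) = fun _ => (g l) ^ a := by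
          funext t; rw [hupd_apply, if_neg hlk]
        rw [this, if_neg hlk]
        exact hasDerivAt_const _ _
    have h2 := HasDerivAt.fun_sum h1
    have h3 : ∑ l ∈ Finset.range q, (if l = k then a * t0 ^ (a-1) else 0)
        = a * t0 ^ (a-1) := by
      rw [Finset.sum_ite_eq' (Finset.range q) k fun _ => a * t0 ^ (a-1)]
      rw [if_pos (Finset.mem_range.mpr hk)]
    rw [h3] at h2
    exact h2
  -- derivative of N
  have hNk : HasDerivAt (fun t => NN a q (upd t)) (2 * (a * EE a q g k)) t0 := by
    have h1 : ∀ i ∈ Finset.range q, ∀ j ∈ Finset.Ico i q,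
        HasDerivAt (fun t => sig (upd t) i j ^ a)
          (if i ≤ k ∧ k ≤ j then a * sig g i j ^ (a-1) else 0) t0 := by
      intro i hi j hj
      obtain ⟨hij, hjq⟩ := Finset.mem_Ico.mp hj
      by_cases hmem : i ≤ k ∧ k ≤ j
      · have he : (fun t => sig (upd t) i j ^ a)
            = fun t => (sig g i j - g k + t) ^ a := by
          funext t; rw [hsig_upd t i j hjq, if_pos hmem]
        rw [he, if_pos hmem]
        have hbase : sig g i j - g k + t0 = sig g i j := by rw [ht0def]; ring
        have hinner : HasDerivAt (fun t : ℝ => sig g i j - g k + t) 1 t0 :=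
          (hasDerivAt_id t0).const_add _
        have houter : HasDerivAt (fun x : ℝ => x ^ a)
            (a * (sig g i j - g k + t0) ^ (a-1)) (sig g i j - g k + t0) := by
          refine Real.hasDerivAt_rpow_const (Or.inl ?_)
          rw [hbase]
          exact ne_of_gt (sig_pos hg hij hjq)
        have := houter.comp t0 hinner
        simp only [mul_one] at this
        rw [hbase] at this
        exact this
      · have he : (fun t => sig (upd t) i j ^ a) = fun _ => sig g i j ^ a := by
          funext t; rw [hsig_upd t i j hjq, if_neg hmem]
        rw [he, if_neg hmem]
        exact hasDerivAt_const _ _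
    have h2 : HasDerivAt (fun t => ∑ i ∈ Finset.range q, ∑ j ∈ Finset.Ico i q,
        sig (upd t) i j ^ a)
        (∑ i ∈ Finset.range q, ∑ j ∈ Finset.Ico i q,
          (if i ≤ k ∧ k ≤ j then a * sig g i j ^ (a-1) else 0)) t0 :=
      HasDerivAt.fun_sum fun i hi => HasDerivAt.fun_sum fun j hj => h1 i hi j hj
    have h3 : ∑ i ∈ Finset.range q, ∑ j ∈ Finset.Ico i q,
        (if i ≤ k ∧ k ≤ j then a * sig g i j ^ (a-1) else 0) = a * EE a q g k := by
      unfold EE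
      rw [Finset.mul_sum]
      refine Finset.sum_congr rfl fun i _ => ?_
      rw [Finset.mul_sum]
      refine Finset.sum_congr rfl fun j _ => ?_
      split_ifs <;> simp
    rw [h3] at h2
    exact h2.const_mul 2
  -- local max of F := N - s * D at t0
  set F : ℝ → ℝ := fun t => NN a q (upd t) - s * DD a q (upd t) with hFdef
  have hFderiv : HasDerivAt F (2 * (a * EE a q g k) - s * (a * t0 ^ (a-1))) t0 :=
    hNk.sub (hDk.const_mul s)
  have hFmax : IsLocalMax F t0 := by
    filter_upwards [eventually_gt_nhds ht0] with t ht
    have hpos := hupd_pos t ht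
    have hDt : 0 < DD a q (upd t) := DD_pos hq hpos
    have hle : NN a q (upd t) / DD a q (upd t) ≤ s := ratio_le_sc ha hq hpos
    rw [div_le_iff₀ hDt] at hle
    have hF0 : F t0 = 0 := by
      simp only [hFdef, hupd_t0]
      rw [hN0]; ring
    rw [hF0]
    simp only [hFdef]
    linarith
  have hzero := hFmax.hasDerivAt_eq_zero hFderiv
  have ha' : a ≠ 0 := ha.ne
  have : a * (2 * EE a q g k) = a * (s * t0 ^ (a-1)) := by ring_nf; ring_nf at hzero; linarith
  have := mul_left_cancel₀ ha' this
  rw [ht0def] at this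
  rw [this, hsdef]


lemma EE_smul (ha : a < 0) {c : ℝ} (hc : 0 < c) {q : ℕ} {g : ℕ → ℝ} (hg : Pos q g) (k : ℕ) :
    EE a q (fun l => c * g l) k = c ^ (a-1) * EE a q g k := by
  unfold EE
  rw [Finset.mul_sum]
  refine Finset.sum_congr rfl fun i _ => ?_
  rw [Finset.mul_sum]
  refine Finset.sum_congr rfl fun j hj => ?_
  obtain ⟨hij, hjq⟩ := Finset.mem_Ico.mp hj
  split_ifs with hcond
  · rw [sig_smul, Real.mul_rpow hc.le (sig_pos hg hij hjq).le]
  · rw [mul_zero]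

lemma comparison (ha : a < 0) {q : ℕ} (hq : 1 ≤ q) {g h : ℕ → ℝ}
    (hg : Pos q g) (hh : Pos q h) {s : ℝ} (hs : 0 < s)
    (hELg : ∀ k < q, 2 * EE a q g k = s * g k ^ (a-1))
    (hELh : ∀ k < q, 2 * EE a q h k = s * h k ^ (a-1)) :
    ∃ lam : ℝ, 0 < lam ∧ ∀ k < q, h k = lam * g k := by
  classical
  have hne : (Finset.range q).Nonempty := ⟨0, Finset.mem_range.mpr (by omega)⟩
  set lam : ℝ := (Finset.range q).sup' hne (fun k => h k / g k) with hlamdef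
  obtain ⟨k0, hk0mem, hk0⟩ := Finset.exists_mem_eq_sup' hne (fun k => h k / g k)
  have hk0q : k0 < q := Finset.mem_range.mp hk0mem
  have hlam_eq : lam = h k0 / g k0 := by rw [hlamdef, hk0]
  have hlampos : 0 < lam := by
    rw [hlam_eq]
    exact div_pos (hh k0 hk0q) (hg k0 hk0q)
  set g' : ℕ → ℝ := fun l => lam * g l with hg'def
  have hg' : Pos q g' := fun l hl => mul_pos hlampos (hg l hl)
  have hELg' : ∀ k < q, 2 * EE a q g' k = s * g' k ^ (a-1) := by
    intro k hkq
    rw [hg'def]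
    show 2 * EE a q (fun l => lam * g l) k = s * (lam * g k) ^ (a-1)
    rw [EE_smul ha hlampos hg k, Real.mul_rpow hlampos.le (hg k hkq).le]
    calc 2 * (lam ^ (a-1) * EE a q g k) = lam ^ (a-1) * (2 * EE a q g k) := by ring
      _ = lam ^ (a-1) * (s * g k ^ (a-1)) := by rw [hELg k hkq]
      _ = s * (lam ^ (a-1) * g k ^ (a-1)) := by ring
  have hle : ∀ k < q, h k ≤ g' k := by
    intro k hkq
    have : h k / g k ≤ lam :=
      Finset.le_sup' (fun k => h k / g k) (Finset.mem_range.mpr hkq)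
    rw [div_le_iff₀ (hg k hkq)] at this
    rw [hg'def]
    show h k ≤ lam * g k
    linarith
  have hk0eq : h k0 = g' k0 := by
    rw [hg'def]
    show h k0 = lam * g k0
    rw [hlam_eq, div_mul_cancel₀ _ (ne_of_gt (hg k0 hk0q))]
  -- sig inequalities on valid pairs
  have hsig_le : ∀ i j : ℕ, i ≤ j → j < q → sig h i j ≤ sig g' i j := by
    intro i j hij hjq
    refine Finset.sum_le_sum fun l hl => ?_
    obtain ⟨hl1, hl2⟩ := Finset.mem_Icc.mp hl
    exact hle l (lt_of_le_of_lt hl2 hjq)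
  -- EE equality at k0
  have hEE_eq : EE a q h k0 = EE a q g' k0 := by
    have h1 := hELh k0 hk0q
    have h2 := hELg' k0 hk0q
    rw [hk0eq] at h1
    rw [← h1] at h2
    linarith
  -- extract pairwise sig equalities
  have hkey : ∀ i j : ℕ, i ≤ k0 → k0 ≤ j → j < q → sig h i j = sig g' i j := by
    have hsum0 : ∑ i ∈ Finset.range q, ∑ j ∈ Finset.Ico i q,
        (if i ≤ k0 ∧ k0 ≤ j then sig h i j ^ (a-1) - sig g' i j ^ (a-1) else 0) = 0 := by
      have : ∀ i ∈ Finset.range q, ∀ j ∈ Finset.Ico i q,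
          (if i ≤ k0 ∧ k0 ≤ j then sig h i j ^ (a-1) - sig g' i j ^ (a-1) else 0)
          = (if i ≤ k0 ∧ k0 ≤ j then sig h i j ^ (a-1) else 0)
            - (if i ≤ k0 ∧ k0 ≤ j then sig g' i j ^ (a-1) else 0) := by
        intro i _ j _
        split_ifs <;> simp
      rw [Finset.sum_congr rfl fun i hi => Finset.sum_congr rfl fun j hj => this i hi j hj]
      have e : ∀ i ∈ Finset.range q, ∑ j ∈ Finset.Ico i q,
          ((if i ≤ k0 ∧ k0 ≤ j then sig h i j ^ (a-1) else 0)
            - (if i ≤ k0 ∧ k0 ≤ j then sig g' i j ^ (a-1) else 0))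
          = (∑ j ∈ Finset.Ico i q, (if i ≤ k0 ∧ k0 ≤ j then sig h i j ^ (a-1) else 0))
            - ∑ j ∈ Finset.Ico i q, (if i ≤ k0 ∧ k0 ≤ j then sig g' i j ^ (a-1) else 0) :=
        fun i _ => Finset.sum_sub_distrib _ _
      rw [Finset.sum_congr rfl e, Finset.sum_sub_distrib]
      have : EE a q h k0 - EE a q g' k0 = 0 := by rw [hEE_eq]; ring
      exact this
    -- nonnegativity of entries
    have hnonneg : ∀ i ∈ Finset.range q, ∀ j ∈ Finset.Ico i q,
        0 ≤ (if i ≤ k0 ∧ k0 ≤ j then sig h i j ^ (a-1) - sig g' i j ^ (a-1) else 0) := by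
      intro i _ j hj
      obtain ⟨hij, hjq⟩ := Finset.mem_Ico.mp hj
      split_ifs with hcond
      · have h1 : sig g' i j ^ (a-1) ≤ sig h i j ^ (a-1) :=
          Real.rpow_le_rpow_of_nonpos (sig_pos hh hij hjq) (hsig_le i j hij hjq)
            (by linarith)
        linarith
      · exact le_rfl
    have houter := (Finset.sum_eq_zero_iff_of_nonneg
      (fun i hi => Finset.sum_nonneg (fun j hj => hnonneg i hi j hj))).mp hsum0
    intro i j hik hkj hjq
    have hij : i ≤ j := le_trans hik hkj
    have hi : i ∈ Finset.range q := Finset.mem_range.mpr (lt_of_le_of_lt hij hjq)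
    have hinner := (Finset.sum_eq_zero_iff_of_nonneg (hnonneg i hi)).mp (houter i hi)
    have hjmem : j ∈ Finset.Ico i q := Finset.mem_Ico.mpr ⟨hij, hjq⟩
    have := hinner j hjmem
    rw [if_pos ⟨hik, hkj⟩] at this
    -- sig h ^ (a-1) = sig g' ^ (a-1) and sig h ≤ sig g' gives equality
    by_contra hne'
    have hlt : sig h i j < sig g' i j := lt_of_le_of_ne (hsig_le i j hij hjq) hne'
    have : sig g' i j ^ (a-1) < sig h i j ^ (a-1) :=
      Real.rpow_lt_rpow_of_neg (sig_pos hh hij hjq) hlt (by linarith)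
    linarith
  -- extract coordinates
  refine ⟨lam, hlampos, ?_⟩
  intro k hkq
  rcases le_or_gt k k0 with hkk0 | hk0k
  · rcases eq_or_lt_of_le hkk0 with heq | hklt
    · subst heq; exact hk0eq
    · -- k < k0 : h k = sig h k k0 - sig h (k+1) k0
      have hsplit : ∀ x : ℕ → ℝ, sig x k k0 = x k + sig x (k+1) k0 := by
        intro x
        unfold sig
        rw [← Finset.Ico_add_one_right_eq_Icc, Finset.sum_eq_sum_Ico_succ_bot (by omega : k < k0 + 1),
          Finset.Ico_add_one_right_eq_Icc]
      have h1 : sig h k k0 = sig g' k k0 := hkey k k0 hkk0 le_rfl hk0q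
      have h2 : sig h (k+1) k0 = sig g' (k+1) k0 := hkey (k+1) k0 (by omega) le_rfl hk0q
      have e1 := hsplit h
      have e2 := hsplit g'
      rw [h1, h2] at e1
      show h k = g' k
      linarith [e1, e2]
  · -- k0 < k : h k = sig h k0 k - sig h k0 (k-1)
    have hk1 : k - 1 + 1 = k := by omega
    have hsplit : ∀ x : ℕ → ℝ, sig x k0 k = sig x k0 (k-1) + x k := by
      intro x
      unfold sig
      rw [← hk1, Finset.sum_Icc_succ_top (by omega : k0 ≤ k - 1 + 1), hk1]
    have h1 : sig h k0 k = sig g' k0 k := hkey k0 k le_rfl (by omega) hkq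
    have h2 : sig h k0 (k-1) = sig g' k0 (k-1) := hkey k0 (k-1) le_rfl (by omega) (by omega)
    have e1 := hsplit h
    have e2 := hsplit g'
    rw [h1, h2] at e1
    show h k = g' k
    linarith [e1, e2]


/-! ### Transfer between point configurations and gap vectors -/

def Yof {p : ℕ} (X : EuclideanSpace ℝ (Fin p)) : ℕ → ℝ :=
  fun i => if h : i < p then X ⟨i, h⟩ else 0

def gof {p : ℕ} (X : EuclideanSpace ℝ (Fin p)) : ℕ → ℝ :=
  fun k => Yof X (k+1) - Yof X k

lemma Yof_lt {p : ℕ} (X : EuclideanSpace ℝ (Fin p)) {i : ℕ} (h : i < p) :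
    Yof X i = X ⟨i, h⟩ := dif_pos h

lemma gof_pos {p : ℕ} {X : EuclideanSpace ℝ (Fin p)} (hX : memR p X) :
    Pos (p-1) (gof X) := by
  intro k hk
  have hk1 : k + 1 < p := by omega
  have hk0 : k < p := by omega
  unfold gof
  rw [Yof_lt X hk1, Yof_lt X hk0, sub_pos]
  exact hX.1 (show (⟨k, hk0⟩ : Fin p) < ⟨k+1, hk1⟩ from Fin.mk_lt_mk.mpr (Nat.lt_succ_self k))

lemma tele {p : ℕ} (X : EuclideanSpace ℝ (Fin p)) :
    ∀ i j : ℕ, i ≤ j → Yof X j - Yof X i = ∑ k ∈ Finset.Ico i j, gof X k := by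
  intro i j hij
  induction j, hij using Nat.le_induction with
  | base => simp
  | succ n hn ihn =>
    rw [Finset.sum_Ico_succ_top hn, ← ihn]
    unfold gof
    ring

lemma gapSum_eq {m : ℝ} {p : ℕ} (hp : 2 ≤ p) (X : EuclideanSpace ℝ (Fin p)) :
    gapSum m p X = DD (1-m) (p-1) (gof X) := by
  set f : ℕ → ℝ := fun i =>
    if h : i + 1 < p then (Yof X (i+1) - Yof X i) ^ (1-m) else 0 with hfdef
  have step1 : gapSum m p X = ∑ i ∈ Finset.range p, f i := by
    rw [← Fin.sum_univ_eq_sum_range f p]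
    unfold gapSum
    refine Finset.sum_congr rfl fun i _ => ?_
    by_cases h : (i : ℕ) + 1 < p
    · rw [dif_pos h]
      simp only [hfdef, dif_pos h]
      rw [Yof_lt X h, Yof_lt X i.isLt]
    · rw [dif_neg h]
      simp only [hfdef, dif_neg h]
  have hp1 : p - 1 + 1 = p := by omega
  have step2 : ∑ i ∈ Finset.range p, f i = ∑ i ∈ Finset.range (p-1), f i := by
    have e : ∑ i ∈ Finset.range p, f i = ∑ i ∈ Finset.range (p-1+1), f i := by rw [hp1]
    rw [e, Finset.sum_range_succ]
    have : f (p-1) = 0 := by simp only [hfdef]; rw [dif_neg (by omega)]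
    rw [this, add_zero]
  rw [step1, step2]
  unfold DD
  refine Finset.sum_congr rfl fun k hk => ?_
  have hk' : k < p - 1 := Finset.mem_range.mp hk
  simp only [hfdef]
  rw [dif_pos (by omega : k + 1 < p)]
  rfl

lemma pairSum_eq {m : ℝ} {p : ℕ} (hp : 2 ≤ p) {X : EuclideanSpace ℝ (Fin p)}
    (hX : memR p X) : pairSum m p X = NN (1-m) (p-1) (gof X) := by
  have hmono : StrictMono fun i => X i := hX.1
  -- step a : symmetrize
  set A : ℝ := ∑ i : Fin p, ∑ j : Fin p,
    (if i < j then (X j - X i) ^ (1-m) else 0) with hAdef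
  have stepa : pairSum m p X = 2 * A := by
    have key : ∀ i j : Fin p, (if i ≠ j then |X i - X j| ^ (1-m) else 0)
        = (if i < j then (X j - X i) ^ (1-m) else 0)
          + (if j < i then (X i - X j) ^ (1-m) else 0) := by
      intro i j
      rcases lt_trichotomy i j with hij | hij | hij
      · rw [if_pos (ne_of_lt hij), if_pos hij, if_neg (not_lt_of_gt hij), add_zero]
        congr 1
        rw [abs_sub_comm, abs_of_pos (sub_pos.mpr (hmono hij))]
      · subst hij
        simp
      · rw [if_pos (ne_of_gt hij), if_neg (not_lt_of_gt hij), if_pos hij, zero_add]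
        congr 1
        rw [abs_of_pos (sub_pos.mpr (hmono hij))]
    unfold pairSum
    rw [Finset.sum_congr rfl fun i _ => Finset.sum_congr rfl fun j _ => key i j]
    rw [Finset.sum_congr rfl fun i (_ : i ∈ Finset.univ) => Finset.sum_add_distrib,
      Finset.sum_add_distrib]
    have hswap : ∑ i : Fin p, ∑ j : Fin p, (if j < i then (X i - X j) ^ (1-m) else 0) = A := by
      rw [Finset.sum_comm, hAdef]
    rw [hswap, hAdef]
    ring
  -- step b : to ℕ sums
  set F : ℕ → ℕ → ℝ := fun i j =>
    if i < j then (Yof X j - Yof X i) ^ (1-m) else 0 with hFdef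
  have stepb : A = ∑ i ∈ Finset.range p, ∑ j ∈ Finset.range p, F i j := by
    rw [hAdef, ← Fin.sum_univ_eq_sum_range (fun i => ∑ j ∈ Finset.range p, F i j) p]
    refine Finset.sum_congr rfl fun i _ => ?_
    rw [← Fin.sum_univ_eq_sum_range (fun j => F (i : ℕ) j) p]
    refine Finset.sum_congr rfl fun j _ => ?_
    simp only [hFdef]
    by_cases h : i < j
    · rw [if_pos h, if_pos (show (i:ℕ) < (j:ℕ) from h)]
      rw [Yof_lt X j.isLt, Yof_lt X i.isLt]
    · rw [if_neg h, if_neg (show ¬((i:ℕ) < (j:ℕ)) from h)]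
  -- step c : inner sums
  have stepc : ∀ i : ℕ, i < p → ∑ j ∈ Finset.range p, F i j
      = ∑ j ∈ Finset.Ico i (p-1), sig (gof X) i j ^ (1-m) := by
    intro i hi
    have e1 : ∑ j ∈ Finset.range p, F i j
        = ∑ j ∈ Finset.Ico (i+1) p, (Yof X j - Yof X i) ^ (1-m) := by
      rw [← Finset.sum_filter]
      congr 1
      ext j
      simp only [Finset.mem_filter, Finset.mem_range, Finset.mem_Ico]
      omega
    rw [e1]
    rw [Finset.sum_Ico_eq_sum_range, Finset.sum_Ico_eq_sum_range]
    rw [show p - (i+1) = p - 1 - i from by omega]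
    refine Finset.sum_congr rfl fun t ht => ?_
    have htp : i + t + 1 < p := by
      have := Finset.mem_range.mp ht
      omega
    have harg : i + 1 + t = i + t + 1 := by omega
    rw [harg]
    have e2 : Yof X (i + t + 1) - Yof X i = sig (gof X) i (i + t) := by
      rw [tele X i (i+t+1) (by omega)]
      unfold sig
      rw [Finset.Ico_add_one_right_eq_Icc]
    rw [e2]
  -- assemble
  rw [stepa, stepb]
  unfold NN
  congr 1
  have hp1 : p - 1 + 1 = p := by omega
  have e : ∑ i ∈ Finset.range p, ∑ j ∈ Finset.range p, F i j
      = ∑ i ∈ Finset.range (p-1+1), ∑ j ∈ Finset.range p, F i j := by rw [hp1]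
  rw [e, Finset.sum_range_succ]
  have hzero : ∑ j ∈ Finset.range p, F (p-1) j
      = ∑ j ∈ Finset.Ico (p-1) (p-1), sig (gof X) (p-1) j ^ (1-m) := stepc (p-1) (by omega)
  rw [hzero]
  rw [Finset.Ico_self, Finset.sum_empty, add_zero]
  exact Finset.sum_congr rfl fun i hi => stepc i (by
    have := Finset.mem_range.mp hi; omega)

/-- building a configuration from a gap vector -/
def Xof (p : ℕ) (g : ℕ → ℝ) : EuclideanSpace ℝ (Fin p) :=
  WithLp.toLp 2 fun i : Fin p => (∑ k ∈ Finset.range (i : ℕ), g k)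
    - (∑ i ∈ Finset.range p, ∑ k ∈ Finset.range i, g k) / p

lemma Xof_memR {p : ℕ} (hp : 2 ≤ p) {g : ℕ → ℝ} (hg : Pos (p-1) g) :
    memR p (Xof p g) := by
  constructor
  · intro i j hij
    have hij' : (i : ℕ) < (j : ℕ) := hij
    unfold Xof
    simp only [PiLp.toLp_apply]
    have : ∑ k ∈ Finset.range (i:ℕ), g k < ∑ k ∈ Finset.range (j:ℕ), g k := by
      rw [Finset.range_eq_Ico, Finset.range_eq_Ico, ← Finset.sum_Ico_consecutive _ (Nat.zero_le _) hij'.le]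
      have hpos : 0 < ∑ k ∈ Finset.Ico (i:ℕ) (j:ℕ), g k := by
        refine Finset.sum_pos (fun k hk => ?_) ⟨(i:ℕ), Finset.mem_Ico.mpr ⟨le_rfl, hij'⟩⟩
        obtain ⟨h1, h2⟩ := Finset.mem_Ico.mp hk
        refine hg k ?_
        have := j.isLt
        omega
      linarith
    linarith
  · have : ∑ i : Fin p, Xof p g i
        = (∑ i : Fin p, ∑ k ∈ Finset.range (i:ℕ), g k)
          - p * ((∑ i ∈ Finset.range p, ∑ k ∈ Finset.range i, g k) / p) := by
      unfold Xof
      simp only [PiLp.toLp_apply]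
      rw [Finset.sum_sub_distrib, Finset.sum_const, Finset.card_univ, Fintype.card_fin,
        nsmul_eq_mul]
    rw [this]
    rw [Fin.sum_univ_eq_sum_range (fun i => ∑ k ∈ Finset.range i, g k) p]
    have hp0 : (p : ℝ) ≠ 0 := by positivity
    field_simp
    ring
  
lemma gof_Xof {p : ℕ} (hp : 2 ≤ p) (g : ℕ → ℝ) :
    ∀ k < p - 1, gof (Xof p g) k = g k := by
  intro k hk
  unfold gof
  rw [Yof_lt _ (show k + 1 < p from by omega), Yof_lt _ (show k < p from by omega)]
  unfold Xof
  simp only [PiLp.toLp_apply]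
  rw [Finset.sum_range_succ]
  ring


lemma Ss_eq (m : ℝ) {p : ℕ} (hp : 2 ≤ p) :
    {r : ℝ | ∃ X : EuclideanSpace ℝ (Fin p), memR p X ∧
      r = pairSum m p X / gapSum m p X} = Ss (1-m) (p-1) := by
  ext r
  constructor
  · rintro ⟨X, hX, rfl⟩
    exact ⟨gof X, gof_pos hX, by rw [pairSum_eq hp hX, gapSum_eq hp X]⟩
  · rintro ⟨g, hg, rfl⟩
    refine ⟨Xof p g, Xof_memR hp hg, ?_⟩
    rw [pairSum_eq hp (Xof_memR hp hg), gapSum_eq hp (Xof p g)]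
    rw [NN_congr (gof_Xof hp g), DD_congr (gof_Xof hp g)]

end Stmt8

open Stmt8 in
theorem stmt8 (m χ : ℝ) (hm : 1 < m) (hχ : 0 < χ) (p : ℕ) (hp : 2 ≤ p) (hc : χ = Cp m p) :
    (∀ X : EuclideanSpace ℝ (Fin p), memR p X → 0 ≤ FF m χ p X) ∧
    (∃ V : EuclideanSpace ℝ (Fin p), memR p V ∧ FF m χ p V = 0 ∧
      ∀ X : EuclideanSpace ℝ (Fin p), memR p X → FF m χ p V ≤ FF m χ p X) ∧
    (∀ V W : EuclideanSpace ℝ (Fin p),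
      memR p V → (∀ X : EuclideanSpace ℝ (Fin p), memR p X → FF m χ p V ≤ FF m χ p X) →
      memR p W → (∀ X : EuclideanSpace ℝ (Fin p), memR p X → FF m χ p W ≤ FF m χ p X) →
      ∃ lam : ℝ, 0 < lam ∧ W = lam • V) := by
  have ha : (1 - m) < 0 := by linarith
  have hq : 1 ≤ p - 1 := by omega
  have hCp : Cp m p = (sc (1-m) (p-1))⁻¹ := by
    unfold Cp Stmt8.sc
    rw [Ss_eq m hp]
  have hχ' : χ = (sc (1-m) (p-1))⁻¹ := by rw [hc, hCp]
  have hscpos : 0 < sc (1-m) (p-1) := sc_pos ha hq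
  have hχsc : χ * sc (1-m) (p-1) = 1 := by
    rw [hχ']; field_simp
  have hminv : (0:ℝ) < (m - 1)⁻¹ := by
    rw [inv_pos]; linarith
  -- FF in terms of gap quantities
  have hFF : ∀ X : EuclideanSpace ℝ (Fin p), memR p X →
      FF m χ p X = (m-1)⁻¹ * (DD (1-m) (p-1) (gof X) - χ * NN (1-m) (p-1) (gof X)) := by
    intro X hX
    unfold FF
    rw [gapSum_eq hp X, pairSum_eq hp hX]
    ring
  -- Part 1
  have part1 : ∀ X : EuclideanSpace ℝ (Fin p), memR p X → 0 ≤ FF m χ p X := by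
    intro X hX
    rw [hFF X hX]
    have hD := DD_pos (a := 1-m) hq (gof_pos hX)
    have hr := ratio_le_sc ha hq (gof_pos hX)
    rw [div_le_iff₀ hD] at hr
    have h1 : χ * NN (1-m) (p-1) (gof X) ≤ χ * (sc (1-m) (p-1) * DD (1-m) (p-1) (gof X)) :=
      mul_le_mul_of_nonneg_left hr hχ.le
    have h2 : χ * (sc (1-m) (p-1) * DD (1-m) (p-1) (gof X)) = DD (1-m) (p-1) (gof X) := by
      rw [← mul_assoc, hχsc, one_mul]
    refine mul_nonneg hminv.le ?_
    linarith
  -- Part 2 : the minimizer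
  obtain ⟨gs, hgs, hgsmax⟩ := attained ha (p-1) hq
  set V0 : EuclideanSpace ℝ (Fin p) := Xof p gs with hV0def
  have hV0mem : memR p V0 := Xof_memR hp hgs
  have hDgs := DD_pos (a := 1-m) hq hgs
  have hNgs : NN (1-m) (p-1) gs = sc (1-m) (p-1) * DD (1-m) (p-1) gs := by
    rw [div_eq_iff hDgs.ne'] at hgsmax
    exact hgsmax
  have hFFV0 : FF m χ p V0 = 0 := by
    rw [hFF V0 hV0mem, NN_congr (gof_Xof hp gs), DD_congr (gof_Xof hp gs), hNgs,
      ← mul_assoc, hχsc, one_mul, sub_self, mul_zero]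
  have part2 : ∃ V : EuclideanSpace ℝ (Fin p), memR p V ∧ FF m χ p V = 0 ∧
      ∀ X : EuclideanSpace ℝ (Fin p), memR p X → FF m χ p V ≤ FF m χ p X :=
    ⟨V0, hV0mem, hFFV0, fun X hX => by rw [hFFV0]; exact part1 X hX⟩
  refine ⟨part1, part2, ?_⟩
  -- Part 3 : uniqueness up to dilation
  intro V W hV hVmin hW hWmin
  have hFFV : FF m χ p V = 0 :=
    le_antisymm (by calc FF m χ p V ≤ FF m χ p V0 := hVmin V0 hV0mem
                    _ = 0 := hFFV0) (part1 V hV)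
  have hFFW : FF m χ p W = 0 :=
    le_antisymm (by calc FF m χ p W ≤ FF m χ p V0 := hWmin V0 hV0mem
                    _ = 0 := hFFV0) (part1 W hW)
  have key : ∀ U : EuclideanSpace ℝ (Fin p), memR p U → FF m χ p U = 0 →
      NN (1-m) (p-1) (gof U) / DD (1-m) (p-1) (gof U) = sc (1-m) (p-1) := by
    intro U hU hFU
    rw [hFF U hU] at hFU
    have h0 : DD (1-m) (p-1) (gof U) - χ * NN (1-m) (p-1) (gof U) = 0 := by
      rcases mul_eq_zero.mp hFU with h | h
      · exact absurd h hminv.ne'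
      · exact h
    have hNU := NN_pos (a := 1-m) hq (gof_pos hU)
    have hDU := DD_pos (a := 1-m) hq (gof_pos hU)
    have hDχN : DD (1-m) (p-1) (gof U) = χ * NN (1-m) (p-1) (gof U) := by linarith
    rw [hDχN]
    rw [div_eq_iff (by positivity : χ * NN (1-m) (p-1) (gof U) ≠ 0)]
    have : sc (1-m) (p-1) * (χ * NN (1-m) (p-1) (gof U))
        = (χ * sc (1-m) (p-1)) * NN (1-m) (p-1) (gof U) := by ring
    rw [this, hχsc, one_mul]
  have hELV := fun k (hk : k < p - 1) =>
    euler_lagrange ha hq (gof_pos hV) (key V hV hFFV) hk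
  have hELW := fun k (hk : k < p - 1) =>
    euler_lagrange ha hq (gof_pos hW) (key W hW hFFW) hk
  obtain ⟨lam, hlampos, hlamk⟩ :=
    comparison ha hq (gof_pos hV) (gof_pos hW) hscpos hELV hELW
  refine ⟨lam, hlampos, ?_⟩
  -- deduce W = lam • V
  have hstep : ∀ n (h : n + 1 < p),
      W ⟨n+1, h⟩ - lam * V ⟨n+1, h⟩ = W ⟨n, by omega⟩ - lam * V ⟨n, by omega⟩ := by
    intro n h
    have hn : n < p - 1 := by omega
    have := hlamk n hn
    unfold gof at this
    rw [Yof_lt W h, Yof_lt W (show n < p from by omega),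
      Yof_lt V h, Yof_lt V (show n < p from by omega)] at this
    linarith [this]
  have hconst : ∀ n (h : n < p), W ⟨n, h⟩ - lam * V ⟨n, h⟩
      = W ⟨0, by omega⟩ - lam * V ⟨0, by omega⟩ := by
    intro n
    induction n with
    | zero => intro h; rfl
    | succ k ih =>
      intro h
      rw [hstep k h]
      exact ih (by omega)
  have hsum : ∑ i : Fin p, (W i - lam * V i) = 0 := by
    rw [Finset.sum_sub_distrib, hW.2, ← Finset.mul_sum, hV.2]
    ring
  have hsumconst : ∑ i : Fin p, (W i - lam * V i)
      = (p : ℝ) * (W ⟨0, by omega⟩ - lam * V ⟨0, by omega⟩) := by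
    have : ∀ i : Fin p, W i - lam * V i = W ⟨0, by omega⟩ - lam * V ⟨0, by omega⟩ := by
      intro i
      have := hconst (i : ℕ) i.isLt
      simpa using this
    rw [Finset.sum_congr rfl fun i _ => this i, Finset.sum_const, Finset.card_univ,
      Fintype.card_fin, nsmul_eq_mul]
  have hzero0 : W ⟨0, by omega⟩ - lam * V ⟨0, by omega⟩ = 0 := by
    rw [hsumconst] at hsum
    have hp0 : (0:ℝ) < p := by positivity
    rcases mul_eq_zero.mp hsum with h | h
    · exact absurd h hp0.ne'
    · exact h
  have hall : ∀ i : Fin p, W i = lam * V i := by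
    intro i
    have h1 := hconst (i : ℕ) i.isLt
    have h2 : W i - lam * V i = 0 := by
      rw [show (⟨(i:ℕ), i.isLt⟩ : Fin p) = i from by simp] at h1
      rw [h1, hzero0]
    linarith
  ext i
  show W i = (lam • V) i
  rw [PiLp.smul_apply, smul_eq_mul]
  exact hall i
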